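/- Let (S, T⁺, T⁻) be an abstract spectrum, ordered by the specialization order a ≤ b iff a lies in the T⁻-closure of {b}. If A ⊆ S is directed with respect to ≤ (i.e., any two elements of A have an upper bound in A), then A has a supremum in the ordered set (S, ≤). Dually, if A is directed downward (any two elements have a lower bound in A), then A has an infimum in (S, ≤). -/

import Mathlib

/-- `B` is a base for the topology `t`: every element of `B` is open and every
open set is a union of elements of `B`. -/
def IsBaseFor {S : Type*} (t : TopologicalSpace S) (B : Set (Set S)) : Prop :=
  (∀ V ∈ B, t.IsOpen V) ∧ ∀ U : Set S, t.IsOpen U → ∀ x ∈ U, ∃ V ∈ B, x ∈ V ∧ V ⊆ U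

/-- The family `L⁺ = {U ∈ T⁺ : S∖U ∈ T⁻}` (for `specL tp tm`); `specL tm tp` is `L⁻`. -/
def specL {S : Type*} (tp tm : TopologicalSpace S) : Set (Set S) :=
  {U | tp.IsOpen U ∧ tm.IsOpen Uᶜ}

/-- `(S, T⁺, T⁻)` is an abstract spectrum. -/
structure IsAbstractSpectrum {S : Type*} (tp tm : TopologicalSpace S) : Prop where
  nonempty : Nonempty S
  base_plus : IsBaseFor tp (specL tp tm)
  base_minus : IsBaseFor tm (specL tm tp)
  compact_of_plus_closed : ∀ F : Set S, @IsClosed S tp F → @IsCompact S tm F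
  compact_of_minus_closed : ∀ F : Set S, @IsClosed S tm F → @IsCompact S tp F
  t0 : @T0Space S tp ∨ @T0Space S tm

/-- The specialization order of an abstract spectrum: `a ≤ b` iff `a` lies in the
`T⁻`-closure of `{b}`. -/
def specLE {S : Type*} (tm : TopologicalSpace S) (a b : S) : Prop :=
  a ∈ @closure S tm {b}

/- Auxiliary lemmas -/

lemma isClosed_of_compl_open {S : Type*} {t : TopologicalSpace S} {U : Set S}
    (hU : t.IsOpen Uᶜ) : @IsClosed S t U := by
  letI := t
  exact isOpen_compl_iff.mp hU

lemma mem_open_of_specLE {S : Type*} {tm : TopologicalSpace S} {U : Set S}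
    (hU : tm.IsOpen U) {x c : S} (hx : x ∈ U) (hle : specLE tm x c) : c ∈ U := by
  letI := tm
  rcases (mem_closure_iff.mp hle) U hU hx with ⟨y, hyU, hy⟩
  rw [Set.mem_singleton_iff] at hy
  exact hy ▸ hyU

/-- Swapping the two topologies of an abstract spectrum gives an abstract spectrum. -/
lemma IsAbstractSpectrum.swap {S : Type*} {tp tm : TopologicalSpace S}
    (h : IsAbstractSpectrum tp tm) : IsAbstractSpectrum tm tp :=
  ⟨h.nonempty, h.base_minus, h.base_plus, h.compact_of_minus_closed,
    h.compact_of_plus_closed, h.t0.symm⟩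

/-- The specialization order of `T⁺` is the opposite of that of `T⁻`. -/
lemma specLE_flip {S : Type*} {tp tm : TopologicalSpace S}
    (h : IsAbstractSpectrum tp tm) {a b : S} (hab : specLE tm a b) : specLE tp b a := by
  letI := tp
  rw [specLE, mem_closure_iff]
  intro V hV hbV
  obtain ⟨U, hUL, hbU, hUV⟩ := h.base_plus.2 V hV b hbV
  by_cases haU : a ∈ U
  · exact ⟨a, hUV haU, rfl⟩
  · exact absurd (mem_open_of_specLE hUL.2 haU hab) (by simpa using hbU)

/-- Existence of suprema of directed sets in an abstract spectrum. -/
lemma spec_sup {S : Type*} (tp tm : TopologicalSpace S)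
    (h : IsAbstractSpectrum tp tm) (A : Set S) (hA : A.Nonempty)
    (hdir : ∀ a ∈ A, ∀ b ∈ A, ∃ c ∈ A, specLE tm a c ∧ specLE tm b c) :
    ∃ s : S, (∀ a ∈ A, specLE tm a s) ∧
      ∀ s' : S, (∀ a ∈ A, specLE tm a s') → specLE tm s s' := by
  letI := tm
  set F : Set S := closure A with hF
  have hFc : @IsClosed S tm F := isClosed_closure
  have hFcomp : @IsCompact S tp F := h.compact_of_minus_closed F hFc
  set ι := {U : Set S // U ∈ specL tm tp ∧ (U ∩ A).Nonempty} with hι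
  have hclosed : ∀ i : ι, @IsClosed S tp i.1 := fun i => isClosed_of_compl_open i.2.1.2
  have hAF : A ⊆ F := subset_closure
  have hFIP : ∀ u : Finset ι, (F ∩ ⋂ i ∈ u, i.1).Nonempty := by
    intro u
    have key : ∃ c ∈ A, ∀ i ∈ u, c ∈ i.1 := by
      classical
      induction u using Finset.induction_on with
      | empty => exact ⟨hA.choose, hA.choose_spec, by simp⟩
      | insert _ _ hi ih =>
        rename_i i₀ u'
        obtain ⟨c, hcA, hc⟩ := ih
        obtain ⟨a₀, ha₀U, ha₀A⟩ := i₀.2.2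
        obtain ⟨d, hdA, hcd, had⟩ := hdir c hcA a₀ ha₀A
        refine ⟨d, hdA, ?_⟩
        intro i hi'
        rcases Finset.mem_insert.mp hi' with h1 | h1
        · subst h1
          exact mem_open_of_specLE i.2.1.1 ha₀U had
        · exact mem_open_of_specLE i.2.1.1 (hc i h1) hcd
    obtain ⟨c, hcA, hc⟩ := key
    exact ⟨c, hAF hcA, by simpa using hc⟩
  have hne : (F ∩ ⋂ i : ι, i.1).Nonempty :=
    @IsCompact.inter_iInter_nonempty S tp F ι hFcomp (fun i => i.1) hclosed hFIP
  obtain ⟨g, hgF, hg⟩ := hne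
  rw [Set.mem_iInter] at hg
  refine ⟨g, ?_, ?_⟩
  · intro a haA
    rw [specLE, mem_closure_iff]
    intro V hV haV
    obtain ⟨U, hUL, haU, hUV⟩ := h.base_minus.2 V hV a haV
    exact ⟨g, hUV (hg ⟨U, hUL, ⟨a, haU, haA⟩⟩), rfl⟩
  · intro s' hs'
    have : F ⊆ closure {s'} :=
      closure_minimal (fun a ha => hs' a ha) isClosed_closure
    exact this hgF

/-- In an abstract spectrum, every (nonempty) upward-directed subset has a supremum and
every (nonempty) downward-directed subset has an infimum with respect to the
specialization order. -/
theorem stmt12 {S : Type*} (tp tm : TopologicalSpace S)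
    (h : IsAbstractSpectrum tp tm) (A : Set S) (hA : A.Nonempty) :
    ((∀ a ∈ A, ∀ b ∈ A, ∃ c ∈ A, specLE tm a c ∧ specLE tm b c) →
      ∃ s : S, (∀ a ∈ A, specLE tm a s) ∧
        ∀ s' : S, (∀ a ∈ A, specLE tm a s') → specLE tm s s') ∧
    ((∀ a ∈ A, ∀ b ∈ A, ∃ c ∈ A, specLE tm c a ∧ specLE tm c b) →
      ∃ s : S, (∀ a ∈ A, specLE tm s a) ∧
        ∀ s' : S, (∀ a ∈ A, specLE tm s' a) → specLE tm s' s) := by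
  constructor
  · exact spec_sup tp tm h A hA
  · intro hdir
    have hdir' : ∀ a ∈ A, ∀ b ∈ A, ∃ c ∈ A, specLE tp a c ∧ specLE tp b c := by
      intro a ha b hb
      obtain ⟨c, hcA, h1, h2⟩ := hdir a ha b hb
      exact ⟨c, hcA, specLE_flip h h1, specLE_flip h h2⟩
    obtain ⟨s, hub, hleast⟩ := spec_sup tm tp h.swap A hA hdir'
    refine ⟨s, fun a ha => specLE_flip h.swap (hub a ha), fun s' hs' => ?_⟩
    exact specLE_flip h.swap (hleast s' (fun a ha => specLE_flip h (hs' a ha)))
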